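/- Let $d = 3$ and $0 < \mu < 1$, $1 < p < 3/(2+\mu)$, and let $D \subset \mathbb{R}^3$ be a bounded domain. Then for every $x \in \mathbb{R}^3$, the function $y \mapsto |x-y|^{-2}$ belongs to the fractional Sobolev space $W^{\mu,p}(D)$; equivalently, the Slobodeckij seminorm is finite: $\int_D\int_D \frac{\big||x-y|^{-2} - |x-z|^{-2}\big|^p}{|y-z|^{p\mu+3}}\,\mathrm{d}y\,\mathrm{d}z < \infty$, and also $\int_D |x-y|^{-2p}\,\mathrm{d}y < \infty$. -/

import Mathlib

open MeasureTheory
open scoped ENNReal NNReal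

private lemma rpow_div_two_pow {R : ℝ} (hR : 0 < R) (u : ℝ) (n : ℕ) :
    (R / 2 ^ n) ^ u = R ^ u * ((2:ℝ) ^ (-u)) ^ n := by
  have h2n : (0:ℝ) < 2 ^ n := by positivity
  rw [div_eq_mul_inv, Real.mul_rpow hR.le (by positivity), ← Real.rpow_natCast (2:ℝ) n,
    Real.inv_rpow (by positivity), ← Real.rpow_neg (by positivity), ← Real.rpow_natCast ((2:ℝ) ^ (-u)) n,
    ← Real.rpow_mul (by norm_num : (0:ℝ) ≤ 2), ← Real.rpow_mul (by norm_num : (0:ℝ) ≤ 2)]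
  ring_nf

private lemma real_term_calc {R : ℝ} (hR : 0 < R) (t : ℝ) (n : ℕ) :
    (R / 2 ^ (n+1)) ^ (-t) * (R / 2 ^ n) ^ (3:ℕ)
      = (R ^ (-t) * 2 ^ t * R ^ (3:ℕ)) * ((2:ℝ) ^ (t-3)) ^ n := by
  have h1 : (R / 2 ^ (n+1)) ^ (-t) = R ^ (-t) * ((2:ℝ) ^ t) ^ (n+1) := by
    rw [rpow_div_two_pow hR (-t) (n+1), neg_neg]
  have h2 : (R / 2 ^ n) ^ (3:ℕ) = R ^ ((3:ℕ):ℝ) * ((2:ℝ) ^ (-((3:ℕ):ℝ))) ^ n := by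
    rw [← Real.rpow_natCast (R / 2 ^ n) 3, rpow_div_two_pow hR]
  have h3 : (R:ℝ) ^ ((3:ℕ):ℝ) = R ^ (3:ℕ) := Real.rpow_natCast R 3
  have h4 : (2:ℝ) ^ (t - 3) = 2 ^ t * 2 ^ (-((3:ℕ):ℝ)) := by
    rw [← Real.rpow_add (by norm_num : (0:ℝ) < 2)]
    push_cast
    ring_nf
  rw [h1, h2, h3, h4, mul_pow, pow_succ]
  ring

open Metric in
private lemma annuli_bound (t : ℝ) (ht0 : 0 < t) (ht3 : t < 3) (ρ : ℝ) :
    ∃ C : ℝ≥0∞, C < ⊤ ∧ ∀ (c : EuclideanSpace ℝ (Fin 3)) (s : Set (EuclideanSpace ℝ (Fin 3))),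
      s ⊆ Metric.closedBall c ρ →
      ∫⁻ w in s, ENNReal.ofReal (‖c - w‖ ^ (-t)) ≤ C := by
  set R : ℝ := max ρ 1 with hRdef
  have hR1 : (1:ℝ) ≤ R := le_max_right _ _
  have hR0 : (0:ℝ) < R := lt_of_lt_of_le one_pos hR1
  set g : ℝ≥0∞ := ENNReal.ofReal ((2:ℝ) ^ (t - 3)) with hgdef
  set V : ℝ≥0∞ := volume (Metric.ball (0 : EuclideanSpace ℝ (Fin 3)) 1) with hVdef
  set K : ℝ≥0∞ := ENNReal.ofReal (R ^ (-t) * 2 ^ t * R ^ (3:ℕ)) * V with hKdef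
  have hg1 : g < 1 := by
    rw [hgdef, ← ENNReal.ofReal_one]
    exact (ENNReal.ofReal_lt_ofReal_iff_of_nonneg (by positivity)).2
      (Real.rpow_lt_one_of_one_lt_of_neg (by norm_num) (by linarith))
  have hVtop : V < ⊤ := measure_ball_lt_top
  refine ⟨K * ∑' n : ℕ, g ^ n, ?_, ?_⟩
  · refine ENNReal.mul_lt_top (ENNReal.mul_lt_top ENNReal.ofReal_lt_top hVtop) ?_
    rw [ENNReal.tsum_geometric]
    exact ENNReal.inv_lt_top.2 (tsub_pos_iff_lt.2 hg1)
  · intro c s hs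
    set S : ℕ → Set (EuclideanSpace ℝ (Fin 3)) := fun n =>
      Metric.closedBall c (R / 2 ^ n) \ Metric.closedBall c (R / 2 ^ (n+1)) with hSdef
    have hcover : s ⊆ {c} ∪ ⋃ n, S n := by
      intro w hw
      rcases eq_or_ne w c with h | h
      · exact Or.inl h
      · right
        have hd0 : 0 < dist w c := dist_pos.2 h
        have hdR : dist w c ≤ R := le_trans (Metric.mem_closedBall.1 (hs hw)) (le_max_left _ _)
        have hex : ∃ m : ℕ, R / 2 ^ m < dist w c := by
          obtain ⟨m, hm⟩ := pow_unbounded_of_one_lt (R / dist w c) (by norm_num : (1:ℝ) < 2)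
          exact ⟨m, (div_lt_iff₀ (by positivity)).2 (by
            have := (div_lt_iff₀ hd0).1 hm
            linarith [this])⟩
        set n₀ := Nat.find hex with hn₀
        have hspec : R / 2 ^ n₀ < dist w c := Nat.find_spec hex
        have hn₀ne : n₀ ≠ 0 := by
          intro h0
          rw [h0] at hspec
          simp only [pow_zero, div_one] at hspec
          linarith
        obtain ⟨m, hm⟩ := Nat.exists_eq_succ_of_ne_zero hn₀ne
        have hmin : ¬ (R / 2 ^ m < dist w c) := Nat.find_min hex (by omega)
        push_neg at hmin
        refine Set.mem_iUnion.2 ⟨m, Metric.mem_closedBall.2 hmin, fun hmem => ?_⟩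
        have := Metric.mem_closedBall.1 hmem
        rw [← Nat.succ_eq_add_one, ← hm] at this
        linarith
    have hterm : ∀ n : ℕ, ∫⁻ w in S n, ENNReal.ofReal (‖c - w‖ ^ (-t)) ≤ K * g ^ n := by
      intro n
      have hrn : (0:ℝ) < R / 2 ^ (n+1) := by positivity
      have hb : ∀ w ∈ S n, ENNReal.ofReal (‖c - w‖ ^ (-t)) ≤
          ENNReal.ofReal ((R / 2 ^ (n+1)) ^ (-t)) := by
        intro w hw
        obtain ⟨hw1, hw2⟩ := hw
        have hlt : R / 2 ^ (n+1) < dist w c := by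
          by_contra hcon
          exact hw2 (Metric.mem_closedBall.2 (not_lt.1 hcon))
        have hnorm : ‖c - w‖ = dist w c := by rw [dist_eq_norm, norm_sub_rev]
        refine ENNReal.ofReal_le_ofReal ?_
        rw [hnorm, Real.rpow_neg hrn.le, Real.rpow_neg (by positivity)]
        exact inv_anti₀ (Real.rpow_pos_of_pos hrn t)
          (Real.rpow_le_rpow hrn.le hlt.le ht0.le)
      calc ∫⁻ w in S n, ENNReal.ofReal (‖c - w‖ ^ (-t))
          ≤ ∫⁻ _ in S n, ENNReal.ofReal ((R / 2 ^ (n+1)) ^ (-t)) :=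
            setLIntegral_mono measurable_const hb
        _ = ENNReal.ofReal ((R / 2 ^ (n+1)) ^ (-t)) * volume (S n) := setLIntegral_const _ _
        _ ≤ ENNReal.ofReal ((R / 2 ^ (n+1)) ^ (-t)) *
              volume (Metric.closedBall c (R / 2 ^ n)) := by
            gcongr
            exact Set.diff_subset
        _ = ENNReal.ofReal ((R / 2 ^ (n+1)) ^ (-t)) *
              (ENNReal.ofReal ((R / 2 ^ n) ^ (3:ℕ)) * V) := by
            rw [Measure.addHaar_closedBall _ _ (by positivity), finrank_euclideanSpace_fin]
        _ = ENNReal.ofReal ((R / 2 ^ (n+1)) ^ (-t) * (R / 2 ^ n) ^ (3:ℕ)) * V := by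
            rw [ENNReal.ofReal_mul (by positivity), mul_assoc]
        _ = K * g ^ n := by
            rw [real_term_calc hR0 t n, ENNReal.ofReal_mul (by positivity), hKdef, hgdef,
              ENNReal.ofReal_pow (by positivity)]
            ring
    calc ∫⁻ w in s, ENNReal.ofReal (‖c - w‖ ^ (-t))
        ≤ ∫⁻ w in {c} ∪ ⋃ n, S n, ENNReal.ofReal (‖c - w‖ ^ (-t)) := lintegral_mono_set hcover
      _ ≤ (∫⁻ w in {c}, ENNReal.ofReal (‖c - w‖ ^ (-t))) +
            ∫⁻ w in ⋃ n, S n, ENNReal.ofReal (‖c - w‖ ^ (-t)) := lintegral_union_le _ _ _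
      _ ≤ 0 + ∑' n, ∫⁻ w in S n, ENNReal.ofReal (‖c - w‖ ^ (-t)) := by
          gcongr
          · exact le_of_eq (setLIntegral_measure_zero _ _ (measure_singleton c))
          · exact lintegral_iUnion_le _ _
      _ ≤ ∑' n, K * g ^ n := by
          rw [zero_add]
          exact ENNReal.tsum_le_tsum hterm
      _ = K * ∑' n, g ^ n := ENNReal.tsum_mul_left

private lemma core_ordered {a b θ : ℝ} (ha : 0 < a) (hab : a ≤ b) (hθ0 : 0 < θ) (hθ1 : θ ≤ 1) :
    a ^ (-(2:ℝ)) - b ^ (-(2:ℝ)) ≤ 2 * (b - a) ^ θ * a ^ (-(2+θ)) := by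
  have hb : 0 < b := lt_of_lt_of_le ha hab
  have hΔ0 : 0 ≤ a ^ (-(2:ℝ)) - b ^ (-(2:ℝ)) := by
    rw [sub_nonneg, Real.rpow_neg ha.le, Real.rpow_neg hb.le]
    exact inv_anti₀ (Real.rpow_pos_of_pos ha 2) (Real.rpow_le_rpow ha.le hab (by norm_num))
  set Δ : ℝ := a ^ (-(2:ℝ)) - b ^ (-(2:ℝ)) with hΔdef
  rcases eq_or_lt_of_le hΔ0 with h0 | hΔpos
  · rw [← h0]
    have : (0:ℝ) ≤ (b - a) ^ θ := Real.rpow_nonneg (by linarith) θ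
    have : (0:ℝ) ≤ a ^ (-(2+θ)) := Real.rpow_nonneg ha.le _
    positivity
  · have e1 : Δ ≤ a ^ (-(2:ℝ)) := by
      have : (0:ℝ) ≤ b ^ (-(2:ℝ)) := Real.rpow_nonneg hb.le _
      rw [hΔdef]; linarith
    have e2 : Δ ≤ 2 * (b - a) * a ^ (-(3:ℝ)) := by
      have ha2 : a ^ (-(2:ℝ)) = (a ^ (2:ℕ))⁻¹ := by
        rw [Real.rpow_neg ha.le, ← Real.rpow_natCast a 2]; norm_num
      have hb2 : b ^ (-(2:ℝ)) = (b ^ (2:ℕ))⁻¹ := by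
        rw [Real.rpow_neg hb.le, ← Real.rpow_natCast b 2]; norm_num
      have ha3 : a ^ (-(3:ℝ)) = (a ^ (3:ℕ))⁻¹ := by
        rw [Real.rpow_neg ha.le, ← Real.rpow_natCast a 3]; norm_num
      rw [hΔdef, ha2, hb2, ha3, inv_sub_inv (by positivity) (by positivity)]
      rw [div_le_iff₀ (by positivity)] at *
      have expand : 2 * (b - a) * (a ^ (3:ℕ))⁻¹ * (a ^ (2:ℕ) * b ^ (2:ℕ))
          = (2 * (b - a) * (a ^ 2 * b ^ 2)) / a ^ 3 := by
        field_simp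
      rw [expand, le_div_iff₀ (by positivity)]
      nlinarith [mul_nonneg (sub_nonneg.2 hab) (mul_pos ha hb).le, sq_nonneg (b - a),
        mul_pos ha hb, mul_pos (mul_pos ha ha) ha, mul_pos (mul_pos ha ha) hb,
        mul_nonneg (mul_nonneg (sub_nonneg.2 hab) ha.le) (mul_pos ha hb).le,
        mul_nonneg (mul_nonneg (sub_nonneg.2 hab) hb.le) (mul_pos ha hb).le]
    calc Δ = Δ ^ θ * Δ ^ (1 - θ) := by
            rw [← Real.rpow_add hΔpos, add_sub_cancel, Real.rpow_one]
      _ ≤ (2 * (b - a) * a ^ (-(3:ℝ))) ^ θ * (a ^ (-(2:ℝ))) ^ (1 - θ) := by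
            refine mul_le_mul (Real.rpow_le_rpow hΔ0 e2 hθ0.le)
              (Real.rpow_le_rpow hΔ0 e1 (by linarith)) (Real.rpow_nonneg hΔ0 _)
              (Real.rpow_nonneg (by nlinarith [Real.rpow_nonneg ha.le (-(3:ℝ))]) _)
      _ = 2 ^ θ * (b - a) ^ θ * (a ^ ((-(3:ℝ))*θ) * a ^ ((-(2:ℝ))*(1-θ))) := by
            rw [Real.mul_rpow (by nlinarith : (0:ℝ) ≤ 2*(b-a)) (Real.rpow_nonneg ha.le _),
              Real.mul_rpow (by norm_num : (0:ℝ) ≤ 2) (by linarith : (0:ℝ) ≤ b - a),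
              ← Real.rpow_mul ha.le, ← Real.rpow_mul ha.le, mul_assoc]
      _ ≤ 2 * (b - a) ^ θ * a ^ (-(2+θ)) := by
            rw [← Real.rpow_add ha]
            have h2θ : (2:ℝ) ^ θ ≤ 2 := by
              calc (2:ℝ) ^ θ ≤ 2 ^ (1:ℝ) := Real.rpow_le_rpow_of_exponent_le one_le_two hθ1
                _ = 2 := Real.rpow_one 2
            have hexp : (-(3:ℝ))*θ + (-(2:ℝ))*(1-θ) = -(2+θ) := by ring
            rw [hexp]
            have hba : (0:ℝ) ≤ (b - a) ^ θ := Real.rpow_nonneg (by linarith) θ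
            have haq : (0:ℝ) ≤ a ^ (-(2+θ)) := Real.rpow_nonneg ha.le _
            nlinarith [mul_nonneg hba haq]

private lemma core_half {μ p θ : ℝ} (hp1 : 1 ≤ p) (hθ0 : 0 < θ) (hθ1 : θ ≤ 1)
    {a b r : ℝ} (ha : 0 < a) (hab : a ≤ b) (hr : 0 < r) (habr : b - a ≤ r) :
    (a ^ (-(2:ℝ)) - b ^ (-(2:ℝ))) ^ p / r ^ (p * μ + 3)
      ≤ 2 ^ p * (a ^ (-(p*(2+θ))) * r ^ (-(p * μ + 3 - p * θ))) := by
  have hb : 0 < b := lt_of_lt_of_le ha hab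
  have hΔ0 : 0 ≤ a ^ (-(2:ℝ)) - b ^ (-(2:ℝ)) := by
    rw [sub_nonneg, Real.rpow_neg ha.le, Real.rpow_neg hb.le]
    exact inv_anti₀ (Real.rpow_pos_of_pos ha 2) (Real.rpow_le_rpow ha.le hab (by norm_num))
  have h1 : a ^ (-(2:ℝ)) - b ^ (-(2:ℝ)) ≤ 2 * r ^ θ * a ^ (-(2+θ)) := by
    refine le_trans (core_ordered ha hab hθ0 hθ1) ?_
    have : (b - a) ^ θ ≤ r ^ θ := Real.rpow_le_rpow (by linarith) habr hθ0.le
    have haq : (0:ℝ) ≤ a ^ (-(2+θ)) := Real.rpow_nonneg ha.le _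
    nlinarith [Real.rpow_nonneg (show (0:ℝ) ≤ b - a by linarith) θ]
  have h2 : (a ^ (-(2:ℝ)) - b ^ (-(2:ℝ))) ^ p ≤ (2 * r ^ θ * a ^ (-(2+θ))) ^ p :=
    Real.rpow_le_rpow hΔ0 h1 (by linarith)
  have h3 : (2 * r ^ θ * a ^ (-(2+θ))) ^ p = 2 ^ p * r ^ (θ*p) * a ^ ((-(2+θ))*p) := by
    rw [Real.mul_rpow (by positivity) (Real.rpow_nonneg ha.le _),
      Real.mul_rpow (by norm_num) (Real.rpow_nonneg hr.le _),
      ← Real.rpow_mul hr.le, ← Real.rpow_mul ha.le]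
  have hrp : (0:ℝ) < r ^ (p * μ + 3) := Real.rpow_pos_of_pos hr _
  calc (a ^ (-(2:ℝ)) - b ^ (-(2:ℝ))) ^ p / r ^ (p * μ + 3)
      ≤ (2 * r ^ θ * a ^ (-(2+θ))) ^ p / r ^ (p * μ + 3) := by gcongr
    _ = 2 ^ p * (a ^ (-(2+θ)*p) * (r ^ (θ*p) * r ^ (-(p * μ + 3)))) := by
        rw [h3, div_eq_mul_inv, ← Real.rpow_neg hr.le]; ring
    _ = 2 ^ p * (a ^ (-(p*(2+θ))) * r ^ (-(p * μ + 3 - p * θ))) := by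
        rw [← Real.rpow_add hr, show θ*p + -(p*μ+3) = -(p*μ+3-p*θ) by ring,
          show -(2+θ)*p = -(p*(2+θ)) by ring]

private lemma core {μ p θ : ℝ} (hp1 : 1 ≤ p) (hθ0 : 0 < θ) (hθ1 : θ ≤ 1)
    {a b r : ℝ} (ha : 0 < a) (hb : 0 < b) (hr : 0 < r) (habr : |a - b| ≤ r) :
    |a ^ (-(2:ℝ)) - b ^ (-(2:ℝ))| ^ p / r ^ (p * μ + 3)
      ≤ 2 ^ p * ((a ^ (-(p*(2+θ))) + b ^ (-(p*(2+θ)))) * r ^ (-(p * μ + 3 - p * θ))) := by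
  have hrs : (0:ℝ) ≤ r ^ (-(p * μ + 3 - p * θ)) := Real.rpow_nonneg hr.le _
  have h2p : (0:ℝ) ≤ 2 ^ p := Real.rpow_nonneg (by norm_num) p
  rcases le_total a b with hab | hab
  · have habs : |a ^ (-(2:ℝ)) - b ^ (-(2:ℝ))| = a ^ (-(2:ℝ)) - b ^ (-(2:ℝ)) := by
      refine abs_of_nonneg ?_
      rw [sub_nonneg, Real.rpow_neg ha.le, Real.rpow_neg hb.le]
      exact inv_anti₀ (Real.rpow_pos_of_pos ha 2) (Real.rpow_le_rpow ha.le hab (by norm_num))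
    rw [habs]
    refine le_trans (core_half hp1 hθ0 hθ1 ha hab hr ?_) ?_
    · calc b - a ≤ |a - b| := by rw [abs_sub_comm]; exact le_abs_self _
        _ ≤ r := habr
    · have hbq : (0:ℝ) ≤ b ^ (-(p*(2+θ))) := Real.rpow_nonneg hb.le _
      have haq : (0:ℝ) ≤ a ^ (-(p*(2+θ))) := Real.rpow_nonneg ha.le _
      nlinarith [mul_nonneg hbq hrs]
  · have habs : |a ^ (-(2:ℝ)) - b ^ (-(2:ℝ))| = b ^ (-(2:ℝ)) - a ^ (-(2:ℝ)) := by
      rw [abs_sub_comm]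
      refine abs_of_nonneg ?_
      rw [sub_nonneg, Real.rpow_neg ha.le, Real.rpow_neg hb.le]
      exact inv_anti₀ (Real.rpow_pos_of_pos hb 2) (Real.rpow_le_rpow hb.le hab (by norm_num))
    rw [habs]
    refine le_trans (core_half hp1 hθ0 hθ1 hb hab hr ?_) ?_
    · calc a - b ≤ |a - b| := le_abs_self _
        _ ≤ r := habr
    · have hbq : (0:ℝ) ≤ b ^ (-(p*(2+θ))) := Real.rpow_nonneg hb.le _
      have haq : (0:ℝ) ≤ a ^ (-(p*(2+θ))) := Real.rpow_nonneg ha.le _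
      nlinarith [mul_nonneg haq hrs]

theorem inv_dist_sq_mem_fractional_sobolev
    (μ p : ℝ) (hμ0 : 0 < μ) (hμ1 : μ < 1) (hp1 : 1 < p) (hp2 : p < 3 / (2 + μ))
    (D : Set (EuclideanSpace ℝ (Fin 3))) (hDo : IsOpen D) (hDne : D.Nonempty)
    (hDb : Bornology.IsBounded D) (x : EuclideanSpace ℝ (Fin 3)) :
    (∫⁻ y in D, ∫⁻ z in D,
        ENNReal.ofReal (|‖x - y‖ ^ (-(2 : ℝ)) - ‖x - z‖ ^ (-(2 : ℝ))| ^ p / ‖y - z‖ ^ (p * μ + 3)))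
        < ⊤ ∧
    (∫⁻ y in D, ENNReal.ofReal (‖x - y‖ ^ (-(2 * p)))) < ⊤ := by
  have hp0 : (0:ℝ) < p := lt_trans one_pos hp1
  have h2μ : (0:ℝ) < 2 + μ := by linarith
  have hkey : p * (2 + μ) < 3 := by
    rw [lt_div_iff₀ h2μ] at hp2; linarith
  have hp32 : p < 3/2 := by nlinarith
  set θ : ℝ := (μ + (3/p - 2))/2 with hθdef
  have hup : μ < 3/p - 2 := by
    rw [lt_sub_iff_add_lt, lt_div_iff₀ hp0]
    nlinarith
  have hθμ : μ < θ := by rw [hθdef]; linarith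
  have hθ0 : 0 < θ := lt_trans hμ0 hθμ
  have hup1 : 3/p - 2 < 1 := by
    rw [sub_lt_iff_lt_add, div_lt_iff₀ hp0]
    nlinarith
  have hθ1 : θ < 1 := by rw [hθdef]; linarith
  have hθup : θ < 3/p - 2 := by rw [hθdef]; linarith
  have hq0 : 0 < p * (2 + θ) := by nlinarith
  have hq3 : p * (2 + θ) < 3 := by
    have h1 : p * (2 + θ) < p * (3/p) := by
      refine mul_lt_mul_of_pos_left ?_ hp0
      linarith
    rwa [mul_div_cancel₀ _ hp0.ne'] at h1
  have hs0 : 0 < p * μ + 3 - p * θ := by nlinarith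
  have hs3 : p * μ + 3 - p * θ < 3 := by nlinarith
  obtain ⟨R, hRD⟩ := hDb.subset_closedBall x
  obtain ⟨C1, hC1top, hC1⟩ := annuli_bound (p * (2 + θ)) hq0 hq3 R
  obtain ⟨C2, hC2top, hC2⟩ := annuli_bound (p * μ + 3 - p * θ) hs0 hs3 (R + R)
  obtain ⟨C3, hC3top, hC3⟩ := annuli_bound (2 * p) (by linarith) (by linarith) R
  have hDmeas : MeasurableSet D := hDo.measurableSet
  -- notation
  set F : EuclideanSpace ℝ (Fin 3) → ℝ≥0∞ :=
    fun w => ENNReal.ofReal (‖x - w‖ ^ (-(p * (2 + θ)))) with hFdef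
  set Rf : EuclideanSpace ℝ (Fin 3) → EuclideanSpace ℝ (Fin 3) → ℝ≥0∞ :=
    fun y z => ENNReal.ofReal (‖y - z‖ ^ (-(p * μ + 3 - p * θ))) with hRfdef
  have measF : Measurable F :=
    ENNReal.measurable_ofReal.comp
      (((measurable_const.sub measurable_id).norm).pow measurable_const)
  have measRf : Measurable (Function.uncurry Rf) :=
    ENNReal.measurable_ofReal.comp
      (((measurable_fst.sub measurable_snd).norm).pow measurable_const)
  have measRy : ∀ y, Measurable (Rf y) := fun y =>
    ENNReal.measurable_ofReal.comp
      (((measurable_const.sub measurable_id).norm).pow measurable_const)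
  have hae : ∀ w : EuclideanSpace ℝ (Fin 3), ∀ᵐ z ∂(volume.restrict D), z ≠ w := by
    intro w
    refine ae_restrict_of_ae ?_
    rw [ae_iff]
    have hset : {z : EuclideanSpace ℝ (Fin 3) | ¬ z ≠ w} = {w} := by ext z; simp
    rw [hset]
    exact measure_singleton w
  have hDsuby : ∀ y ∈ D, D ⊆ Metric.closedBall y (R + R) := by
    intro y hy z hz
    rw [Metric.mem_closedBall]
    calc dist z y ≤ dist z x + dist x y := dist_triangle _ _ _
      _ ≤ R + R := add_le_add (Metric.mem_closedBall.1 (hRD hz))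
          (by rw [dist_comm]; exact Metric.mem_closedBall.1 (hRD hy))
  constructor
  · -- main seminorm bound
    have stepA : (∫⁻ y in D, ∫⁻ z in D,
        ENNReal.ofReal (|‖x - y‖ ^ (-(2 : ℝ)) - ‖x - z‖ ^ (-(2 : ℝ))| ^ p / ‖y - z‖ ^ (p * μ + 3)))
          ≤ ∫⁻ y in D, ∫⁻ z in D, ENNReal.ofReal (2 ^ p) * ((F y + F z) * Rf y z) := by
      refine lintegral_mono_ae ?_
      filter_upwards [hae x] with y hyx
      refine lintegral_mono_ae ?_
      filter_upwards [hae x, hae y] with z hzx hzy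
      have ha : 0 < ‖x - y‖ := by
        rw [norm_sub_pos_iff]; exact Ne.symm hyx
      have hb : 0 < ‖x - z‖ := by
        rw [norm_sub_pos_iff]; exact Ne.symm hzx
      have hr : 0 < ‖y - z‖ := by
        rw [norm_sub_pos_iff]; exact Ne.symm hzy
      have habr : |‖x - y‖ - ‖x - z‖| ≤ ‖y - z‖ := by
        calc |‖x - y‖ - ‖x - z‖| ≤ ‖(x - y) - (x - z)‖ := abs_norm_sub_norm_le _ _
          _ = ‖y - z‖ := by rw [show (x - y) - (x - z) = -(y - z) by abel, norm_neg]
      have hcore := core (μ := μ) hp1.le hθ0 hθ1.le ha hb hr habr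
      calc ENNReal.ofReal (|‖x - y‖ ^ (-(2 : ℝ)) - ‖x - z‖ ^ (-(2 : ℝ))| ^ p / ‖y - z‖ ^ (p * μ + 3))
          ≤ ENNReal.ofReal (2 ^ p * ((‖x - y‖ ^ (-(p*(2+θ))) + ‖x - z‖ ^ (-(p*(2+θ))))
              * ‖y - z‖ ^ (-(p * μ + 3 - p * θ)))) := ENNReal.ofReal_le_ofReal hcore
        _ = ENNReal.ofReal (2 ^ p) * ((F y + F z) * Rf y z) := by
            rw [ENNReal.ofReal_mul (Real.rpow_nonneg (by norm_num) p),
              ENNReal.ofReal_mul (by positivity),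
              ENNReal.ofReal_add (by positivity) (by positivity)]
    have inner_eq : ∀ y, (∫⁻ z in D, ENNReal.ofReal (2 ^ p) * ((F y + F z) * Rf y z))
        = ENNReal.ofReal (2 ^ p) *
          ((∫⁻ z in D, F y * Rf y z) + ∫⁻ z in D, F z * Rf y z) := by
      intro y
      rw [lintegral_const_mul' _ _ ENNReal.ofReal_ne_top]
      congr 1
      simp_rw [add_mul]
      rw [lintegral_add_left ((measRy y).const_mul (F y))]
    have hT1 : (∫⁻ y in D, ∫⁻ z in D, F y * Rf y z) ≤ C2 * C1 := by
      calc ∫⁻ y in D, ∫⁻ z in D, F y * Rf y z ≤ ∫⁻ y in D, F y * C2 := by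
            refine lintegral_mono_ae ?_
            filter_upwards [ae_restrict_mem hDmeas] with y hy
            rw [lintegral_const_mul' _ _ ENNReal.ofReal_ne_top]
            exact mul_le_mul_right (hC2 y D (hDsuby y hy)) _
        _ = C2 * ∫⁻ y in D, F y := by
            simp_rw [mul_comm (F _) C2]
            exact lintegral_const_mul' _ _ hC2top.ne
        _ ≤ C2 * C1 := mul_le_mul_right (hC1 x D hRD) _
    have hT2 : (∫⁻ y in D, ∫⁻ z in D, F z * Rf y z) ≤ C2 * C1 := by
      have hswap : (∫⁻ y in D, ∫⁻ z in D, F z * Rf y z)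
          = ∫⁻ z in D, ∫⁻ y in D, F z * Rf y z :=
        lintegral_lintegral_swap (((measF.comp measurable_snd).mul measRf).aemeasurable)
      rw [hswap]
      calc ∫⁻ z in D, ∫⁻ y in D, F z * Rf y z ≤ ∫⁻ z in D, F z * C2 := by
            refine lintegral_mono_ae ?_
            filter_upwards [ae_restrict_mem hDmeas] with z hz
            rw [lintegral_const_mul' _ _ ENNReal.ofReal_ne_top]
            refine mul_le_mul_right ?_ _
            have hrw : (∫⁻ y in D, Rf y z)
                = ∫⁻ y in D, ENNReal.ofReal (‖z - y‖ ^ (-(p * μ + 3 - p * θ))) := by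
              refine lintegral_congr fun y => ?_
              rw [hRfdef]
              simp only []
              rw [norm_sub_rev]
            rw [hrw]
            exact hC2 z D (hDsuby z hz)
        _ = C2 * ∫⁻ z in D, F z := by
            simp_rw [mul_comm (F _) C2]
            exact lintegral_const_mul' _ _ hC2top.ne
        _ ≤ C2 * C1 := mul_le_mul_right (hC1 x D hRD) _
    have final : (∫⁻ y in D, ∫⁻ z in D, ENNReal.ofReal (2 ^ p) * ((F y + F z) * Rf y z))
        ≤ ENNReal.ofReal (2 ^ p) * (C2 * C1 + C2 * C1) := by
      calc (∫⁻ y in D, ∫⁻ z in D, ENNReal.ofReal (2 ^ p) * ((F y + F z) * Rf y z))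
          = ∫⁻ y in D, ENNReal.ofReal (2 ^ p) *
              ((∫⁻ z in D, F y * Rf y z) + ∫⁻ z in D, F z * Rf y z) := by
            exact lintegral_congr fun y => inner_eq y
        _ = ENNReal.ofReal (2 ^ p) *
              ((∫⁻ y in D, ∫⁻ z in D, F y * Rf y z) + ∫⁻ y in D, ∫⁻ z in D, F z * Rf y z) := by
            rw [lintegral_const_mul' _ _ ENNReal.ofReal_ne_top,
              lintegral_add_left (Measurable.lintegral_prod_right
                (f := fun y z => F y * Rf y z) ((measF.comp measurable_fst).mul measRf))]
        _ ≤ ENNReal.ofReal (2 ^ p) * (C2 * C1 + C2 * C1) :=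
            mul_le_mul_right (add_le_add hT1 hT2) _
    refine lt_of_le_of_lt (stepA.trans final) ?_
    exact ENNReal.mul_lt_top ENNReal.ofReal_lt_top
      (ENNReal.add_lt_top.2 ⟨ENNReal.mul_lt_top hC2top hC1top, ENNReal.mul_lt_top hC2top hC1top⟩)
  · exact lt_of_le_of_lt (hC3 x D hRD) hC3top
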